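/- (Counting of constant solutions of the isotropic equation.) Let n ≥ 2, 1 ≤ p < n, α > 0 and q < α/(n+α). Fix a unit vector e ∈ ℝⁿ and define F : (0,∞) → [0,∞) by F(r) = r^{n−p}·g_{α,q}(r·e) (F(r) is independent of e). Set R = (α/q)^{1/α} if q > 0 and R = ∞ if q ≤ 0. Then: F(r) → 0 as r → 0⁺, F(r) → 0 as r → R, F vanishes on [R, ∞) when q > 0, and there is a unique r* ∈ (0, R) such that F is strictly increasing on (0, r*] and strictly decreasing on [r*, R). Consequently, writing c* = F(r*) > 0, for every constant c the equation F(r) = c with r > 0 (which is exactly the equation satisfied by constant positive solutions h ≡ r of c·h^{p−1}·g_{α,q}(h)^{−1}·κ = 1 on a sphere of radius r, whose Gauss curvature is κ = r^{−(n−1)}) has precisely two solutions if 0 < c < c*, precisely one solution if c = c*, and no solution if c > c*. -/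

import Mathlib

open MeasureTheory Real Filter
open scoped Pointwise RealInnerProductSpace

/-- The (unnormalized) radial profile of the generalized Gaussian density in dimension `n`:
`r ↦ max(1 − (q/α) r^α, 0)^(1/q − n/α − 1)` for `q ≠ 0` and `r ↦ exp(−r^α/α)` for `q = 0`. -/
noncomputable def gProfile (n : ℕ) (α q r : ℝ) : ℝ :=
  if q = 0 then Real.exp (-(r ^ α) / α)
  else (max (1 - q / α * r ^ α) 0) ^ (1 / q - (n : ℝ) / α - 1)

/-- The partition function `Z(α,q)`, i.e. the normalizing constant making the generalized
Gaussian density a probability density. -/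
noncomputable def Zconst (n : ℕ) (α q : ℝ) : ℝ :=
  ∫ x : EuclideanSpace ℝ (Fin n), gProfile n α q ‖x‖

/-- The generalized Gaussian density `g_{α,q}` on `ℝⁿ`. -/
noncomputable def gGauss (n : ℕ) (α q : ℝ) (x : EuclideanSpace ℝ (Fin n)) : ℝ :=
  (Zconst n α q)⁻¹ * gProfile n α q ‖x‖

/-- The generalized Gaussian volume `G_{α,q}(K) = ∫_K g_{α,q}(x) dx`. -/
noncomputable def Ggen (n : ℕ) (α q : ℝ) (K : Set (EuclideanSpace ℝ (Fin n))) : ℝ :=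
  ∫ x in K, gGauss n α q x

namespace IsoAux

variable {n : ℕ} {p α q : ℝ}

lemma gProfile_nonneg (r : ℝ) : 0 ≤ gProfile n α q r := by
  unfold gProfile
  split
  · exact (Real.exp_pos _).le
  · exact Real.rpow_nonneg (le_max_right _ _) _

lemma gProfile_pos (hα : 0 < α) {r : ℝ} (hr : 0 ≤ r)
    (h : 0 < q → r ^ α < α / q) : 0 < gProfile n α q r := by
  unfold gProfile
  split
  · exact Real.exp_pos _
  · rename_i hq0
    have hbase : 0 < 1 - q / α * r ^ α := by
      rcases lt_trichotomy q 0 with h1 | h1 | h1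
      · have hqa : q / α ≤ 0 := div_nonpos_iff.mpr (Or.inr ⟨h1.le, hα.le⟩)
        have : q / α * r ^ α ≤ 0 := mul_nonpos_iff.mpr (Or.inr ⟨hqa, Real.rpow_nonneg hr α⟩)
        linarith
      · exact absurd h1 hq0
      · have h2 := h h1
        have h3 : q / α * r ^ α < q / α * (α / q) :=
          mul_lt_mul_of_pos_left h2 (div_pos h1 hα)
        have h4 : q / α * (α / q) = 1 := by field_simp
        linarith
    rw [max_eq_left hbase.le]
    exact Real.rpow_pos_of_pos hbase _


lemma ex_pos (hα : 0 < α) (hq0 : 0 < q) (hq : q < α / ((n : ℝ) + α)) :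
    0 < 1 / q - (n : ℝ) / α - 1 := by
  have hnα : (0 : ℝ) < (n : ℝ) + α := by positivity
  have h1 : q * ((n : ℝ) + α) < α := (lt_div_iff₀ hnα).mp hq
  have key : 1 / q - (n : ℝ) / α - 1 = (α - q * ((n : ℝ) + α)) / (q * α) := by
    field_simp
    ring
  rw [key]
  exact div_pos (by linarith) (by positivity)

lemma gProfile_eq_zero (hα : 0 < α) (hq0 : 0 < q) (hq : q < α / ((n : ℝ) + α))
    {r : ℝ} (h : α / q ≤ r ^ α) : gProfile n α q r = 0 := by
  unfold gProfile
  rw [if_neg hq0.ne']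
  have h1 : 1 - q / α * r ^ α ≤ 0 := by
    have h2 : q / α * (α / q) ≤ q / α * r ^ α :=
      mul_le_mul_of_nonneg_left h (div_pos hq0 hα).le
    have h3 : q / α * (α / q) = 1 := by field_simp
    linarith
  rw [max_eq_right h1, Real.zero_rpow (ex_pos hα hq0 hq).ne']

lemma phi_deriv (hα : 0 < α) {r : ℝ} (hr : 0 < r)
    (hrq : 0 < q → r ^ α < α / q) :
    ∃ w : ℝ, 0 < w ∧ HasDerivAt (fun x : ℝ => x ^ ((n : ℝ) - p) * gProfile n α q x)
      (r ^ ((n : ℝ) - p - 1) * w *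
        (((n : ℝ) - p) - (1 - q * (p + α) / α) * r ^ α)) r := by
  have h2 : HasDerivAt (fun x : ℝ => x ^ α) (α * r ^ (α - 1)) r :=
    Real.hasDerivAt_rpow_const (Or.inl hr.ne')
  have h1 : HasDerivAt (fun x : ℝ => x ^ ((n : ℝ) - p))
      (((n : ℝ) - p) * r ^ ((n : ℝ) - p - 1)) r :=
    Real.hasDerivAt_rpow_const (Or.inl hr.ne')
  have hrα : r ^ (α - 1) = r ^ α / r := Real.rpow_sub_one hr.ne' α
  have hrm : r ^ ((n : ℝ) - p) = r ^ ((n : ℝ) - p - 1) * r := by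
    rw [Real.rpow_sub_one hr.ne', div_mul_cancel₀ _ hr.ne']
  rcases eq_or_ne q 0 with hq0 | hq0
  · subst hq0
    refine ⟨Real.exp (-(r ^ α) / α), Real.exp_pos _, ?_⟩
    have h3 : HasDerivAt (fun x : ℝ => -(x ^ α) / α) (-(α * r ^ (α - 1)) / α) r :=
      h2.neg.div_const α
    have h4 := h3.exp
    have h5 := h1.mul h4
    have heq : (fun x : ℝ => x ^ ((n : ℝ) - p) * gProfile n α 0 x) =
        fun x : ℝ => x ^ ((n : ℝ) - p) * Real.exp (-(x ^ α) / α) := by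
      funext x; simp [gProfile]
    rw [heq]
    refine h5.congr_deriv ?_
    rw [hrm, hrα]
    field_simp
    ring
  · have hu : 0 < 1 - q / α * r ^ α := by
      rcases lt_trichotomy q 0 with h1' | h1' | h1'
      · have hqa : q / α ≤ 0 := div_nonpos_iff.mpr (Or.inr ⟨h1'.le, hα.le⟩)
        have : q / α * r ^ α ≤ 0 :=
          mul_nonpos_iff.mpr (Or.inr ⟨hqa, Real.rpow_nonneg hr.le α⟩)
        linarith
      · exact absurd h1' hq0
      · have h2' := hrq h1'
        have h3' : q / α * r ^ α < q / α * (α / q) :=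
          mul_lt_mul_of_pos_left h2' (div_pos h1' hα)
        have h4' : q / α * (α / q) = 1 := by field_simp
        linarith
    set ex := 1 / q - (n : ℝ) / α - 1 with hex
    refine ⟨(1 - q / α * r ^ α) ^ (ex - 1), Real.rpow_pos_of_pos hu _, ?_⟩
    have h3 : HasDerivAt (fun x : ℝ => 1 - q / α * x ^ α)
        (-(q / α * (α * r ^ (α - 1)))) r := (h2.const_mul (q / α)).const_sub 1
    have h4 : HasDerivAt (fun x : ℝ => (1 - q / α * x ^ α) ^ ex)
        (-(q / α * (α * r ^ (α - 1))) * ex * (1 - q / α * r ^ α) ^ (ex - 1)) r :=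
      h3.rpow_const (Or.inl hu.ne')
    have h5 := h1.mul h4
    have hmem : {x : ℝ | 0 < 1 - q / α * x ^ α} ∈ nhds r := by
      have : Set.Ioi (0:ℝ) ∈ nhds (1 - q / α * r ^ α) := Ioi_mem_nhds hu
      exact h3.continuousAt.preimage_mem_nhds this
    have hev : (fun x : ℝ => x ^ ((n : ℝ) - p) * gProfile n α q x) =ᶠ[nhds r]
        (fun x : ℝ => x ^ ((n : ℝ) - p) * (1 - q / α * x ^ α) ^ ex) := by
      filter_upwards [hmem] with x hx
      simp only [gProfile, if_neg hq0, max_eq_left (le_of_lt hx)]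
      rfl
    refine HasDerivAt.congr_of_eventuallyEq ?_ hev
    refine h5.congr_deriv ?_
    have huex : (1 - q / α * r ^ α) ^ ex =
        (1 - q / α * r ^ α) ^ (ex - 1) * (1 - q / α * r ^ α) := by
      rw [← Real.rpow_add_one hu.ne' (ex - 1), sub_add_cancel]
    rw [huex, hrm, hrα, hex]
    field_simp
    ring


lemma decay_bound (hα : 0 < α) {c ex : ℝ} (hc : 0 < c) (hex : ex ≤ 0) :
    ∃ C : ℝ, ∀ r : ℝ, 0 ≤ r → (1 + c * r ^ α) ^ ex ≤ C * (1 + r) ^ (α * ex) := by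
  have h2 : (0:ℝ) < 2 ^ (-α) := Real.rpow_pos_of_pos two_pos _
  have hd : 0 < min 1 c * 2 ^ (-α) := by
    have := lt_min one_pos hc
    positivity
  refine ⟨(min 1 c * 2 ^ (-α)) ^ ex, fun r hr => ?_⟩
  have h1r : (0:ℝ) < 1 + r := by linarith
  have hrpn : (0:ℝ) ≤ r ^ α := Real.rpow_nonneg hr α
  have hb : min 1 c * 2 ^ (-α) * (1 + r) ^ α ≤ 1 + c * r ^ α := by
    have key : (1 + r) ^ α ≤ 2 ^ α * (1 + r ^ α) := by
      rcases le_total r 1 with h | h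
      · calc (1 + r) ^ α ≤ 2 ^ α := Real.rpow_le_rpow (by linarith) (by linarith) hα.le
          _ ≤ 2 ^ α * (1 + r ^ α) := by
              nlinarith [Real.rpow_pos_of_pos two_pos α]
      · calc (1 + r) ^ α ≤ (2 * r) ^ α :=
              Real.rpow_le_rpow (by linarith) (by linarith) hα.le
          _ = 2 ^ α * r ^ α := Real.mul_rpow two_pos.le hr
          _ ≤ 2 ^ α * (1 + r ^ α) := by
              nlinarith [Real.rpow_pos_of_pos two_pos α]
    have key2 : min 1 c * (1 + r ^ α) ≤ 1 + c * r ^ α := by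
      have ha1 : min 1 c ≤ 1 := min_le_left _ _
      have ha2 : min 1 c ≤ c := min_le_right _ _
      nlinarith
    have h2α : (2:ℝ) ^ (-α) * 2 ^ α = 1 := by
      rw [← Real.rpow_add two_pos]; simp
    have hmin : 0 ≤ min 1 c := (lt_min one_pos hc).le
    calc min 1 c * 2 ^ (-α) * (1 + r) ^ α
        ≤ min 1 c * 2 ^ (-α) * (2 ^ α * (1 + r ^ α)) := by
          apply mul_le_mul_of_nonneg_left key (by positivity)
      _ = min 1 c * (2 ^ (-α) * 2 ^ α) * (1 + r ^ α) := by ring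
      _ = min 1 c * (1 + r ^ α) := by rw [h2α, mul_one]
      _ ≤ 1 + c * r ^ α := key2
  calc (1 + c * r ^ α) ^ ex ≤ (min 1 c * 2 ^ (-α) * (1 + r) ^ α) ^ ex :=
        Real.rpow_le_rpow_of_nonpos (by positivity) hb hex
    _ = (min 1 c * 2 ^ (-α)) ^ ex * ((1 + r) ^ α) ^ ex :=
        Real.mul_rpow hd.le (Real.rpow_nonneg h1r.le _)
    _ = (min 1 c * 2 ^ (-α)) ^ ex * (1 + r) ^ (α * ex) := by
        rw [← Real.rpow_mul h1r.le]

lemma cont_gnorm (hα : 0 < α) (hq : q < α / ((n : ℝ) + α)) :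
    Continuous fun x : EuclideanSpace ℝ (Fin n) => gProfile n α q ‖x‖ := by
  have hra : Continuous fun x : EuclideanSpace ℝ (Fin n) => ‖x‖ ^ α :=
    continuous_norm.rpow_const (fun x => Or.inr hα.le)
  rcases eq_or_ne q 0 with hq0 | hq0
  · subst hq0
    simp only [gProfile, if_pos rfl]
    exact Real.continuous_exp.comp (hra.neg.div_const α)
  · simp only [gProfile, if_neg hq0]
    have hbase : Continuous fun x : EuclideanSpace ℝ (Fin n) =>
        max (1 - q / α * ‖x‖ ^ α) 0 :=
      (continuous_const.sub (continuous_const.mul hra : Continuous fun x : EuclideanSpace ℝ (Fin n) => q / α * ‖x‖ ^ α)).max continuous_const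
    apply hbase.rpow_const
    intro x
    rcases lt_trichotomy q 0 with h1 | h1 | h1
    · left
      have hqa : q / α ≤ 0 := div_nonpos_iff.mpr (Or.inr ⟨h1.le, hα.le⟩)
      have : q / α * ‖x‖ ^ α ≤ 0 :=
        mul_nonpos_iff.mpr (Or.inr ⟨hqa, Real.rpow_nonneg (norm_nonneg x) α⟩)
      have : (1:ℝ) ≤ max (1 - q / α * ‖x‖ ^ α) 0 := le_max_of_le_left (by linarith)
      linarith
    · exact absurd h1 hq0
    · exact Or.inr (ex_pos hα h1 hq).le

lemma integrable_gnorm (hα : 0 < α) (hq : q < α / ((n : ℝ) + α)) :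
    Integrable (fun x : EuclideanSpace ℝ (Fin n) => gProfile n α q ‖x‖) := by
  have hcont := cont_gnorm (n := n) hα hq
  rcases lt_trichotomy q 0 with hq0 | hq0 | hq0
  · -- q < 0 : polynomial decay
    set ex := 1 / q - (n : ℝ) / α - 1 with hex
    have hexneg : ex < 0 := by
      have h1 : 1 / q < 0 := div_neg_of_pos_of_neg one_pos hq0
      have h2 : 0 ≤ (n : ℝ) / α := by positivity
      simp only [hex]; linarith
    have hc : 0 < -(q / α) := by
      have : q / α < 0 := div_neg_of_neg_of_pos hq0 hα
      linarith
    obtain ⟨C, hC⟩ := decay_bound hα hc hexneg.le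
    have hs : (Module.finrank ℝ (EuclideanSpace ℝ (Fin n)) : ℝ) < -(α * ex) := by
      rw [finrank_euclideanSpace_fin]
      have : α * ex = α / q - (n : ℝ) - α := by
        simp only [hex]; field_simp
      have hαq : α / q < 0 := div_neg_of_pos_of_neg hα hq0
      rw [this]; push_cast; linarith
    have hint : Integrable fun x : EuclideanSpace ℝ (Fin n) =>
        C * (1 + ‖x‖) ^ (-(-(α * ex))) := (integrable_one_add_norm (μ := volume) hs).const_mul C
    simp only [neg_neg] at hint
    apply hint.mono' hcont.aestronglyMeasurable
    filter_upwards with x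
    rw [Real.norm_eq_abs, abs_of_nonneg (gProfile_nonneg _)]
    have heq : gProfile n α q ‖x‖ = (1 + -(q / α) * ‖x‖ ^ α) ^ ex := by
      simp only [gProfile, if_neg hq0.ne, hex]
      congr 1
      rw [max_eq_left]
      · ring
      · have : q / α * ‖x‖ ^ α ≤ 0 :=
          mul_nonpos_iff.mpr (Or.inr ⟨div_nonpos_iff.mpr (Or.inr ⟨hq0.le, hα.le⟩),
            Real.rpow_nonneg (norm_nonneg x) α⟩)
        linarith
    rw [heq]
    exact hC ‖x‖ (norm_nonneg x)
  · -- q = 0 : exponential decay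
    subst hq0
    set k : ℕ := ⌈((n : ℝ) + 1) / α⌉₊ with hk
    have hk0 : 0 < k := Nat.ceil_pos.mpr (by positivity)
    have hkα : (n : ℝ) + 1 ≤ α * k := by
      have := Nat.le_ceil (((n : ℝ) + 1) / α)
      rw [div_le_iff₀ hα] at this
      linarith [this]
    have hc : (0:ℝ) < 1 / (k * α) := by positivity
    obtain ⟨C, hC⟩ := decay_bound hα hc (neg_nonpos_of_nonneg (Nat.cast_nonneg k) :
      -(k:ℝ) ≤ 0)
    have hs : (Module.finrank ℝ (EuclideanSpace ℝ (Fin n)) : ℝ) < -(α * -(k:ℝ)) := by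
      rw [finrank_euclideanSpace_fin]
      push_cast
      nlinarith
    have hint : Integrable fun x : EuclideanSpace ℝ (Fin n) =>
        C * (1 + ‖x‖) ^ (α * -(k:ℝ)) := by
      have := (integrable_one_add_norm (E := EuclideanSpace ℝ (Fin n)) (μ := volume) hs).const_mul C
      simpa using this
    apply hint.mono' hcont.aestronglyMeasurable
    filter_upwards with x
    rw [Real.norm_eq_abs, abs_of_nonneg (gProfile_nonneg _)]
    have hstep : gProfile n α 0 ‖x‖ ≤ (1 + 1 / (k * α) * ‖x‖ ^ α) ^ (-(k:ℝ)) := by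
      simp only [gProfile, if_pos rfl]
      set t := ‖x‖ ^ α with ht
      have htn : 0 ≤ t := Real.rpow_nonneg (norm_nonneg x) α
      have hbase : (0:ℝ) < 1 + 1 / (k * α) * t := by positivity
      rw [Real.rpow_neg hbase.le, Real.rpow_natCast]
      have hexp : Real.exp (-t / α) = (Real.exp (t / α))⁻¹ := by
        rw [← Real.exp_neg]; ring_nf
      rw [hexp]
      apply inv_anti₀
      · positivity
      · calc (1 + 1 / (k * α) * t) ^ k ≤ Real.exp (1 / (k * α) * t) ^ k := by
              apply pow_le_pow_left₀ hbase.le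
              linarith [Real.add_one_le_exp (1 / (k * α) * t)]
          _ = Real.exp ((k : ℝ) * (1 / (k * α) * t)) := by
              rw [← Real.exp_nat_mul]
          _ = Real.exp (t / α) := by
              congr 1
              field_simp
    calc gProfile n α 0 ‖x‖ ≤ (1 + 1 / (k * α) * ‖x‖ ^ α) ^ (-(k:ℝ)) := hstep
      _ ≤ C * (1 + ‖x‖) ^ (α * -(k:ℝ)) := hC ‖x‖ (norm_nonneg x)
  · -- q > 0 : compact support
    apply hcont.integrable_of_hasCompactSupport
    apply HasCompactSupport.intro (isCompact_closedBall (0 : EuclideanSpace ℝ (Fin n))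
      ((α / q) ^ (1 / α)))
    intro x hx
    rw [Metric.mem_closedBall, not_le, dist_zero_right] at hx
    apply gProfile_eq_zero hα hq0 hq
    have hR0 : (0:ℝ) ≤ (α / q) ^ (1 / α) := Real.rpow_nonneg (by positivity) _
    have := Real.rpow_le_rpow hR0 hx.le hα.le
    rwa [one_div, Real.rpow_inv_rpow (by positivity) hα.ne'] at this


lemma Zpos (hα : 0 < α) (hq : q < α / ((n : ℝ) + α)) : 0 < Zconst n α q := by
  rw [Zconst,
    integral_pos_iff_support_of_nonneg (fun x => gProfile_nonneg _) (integrable_gnorm hα hq)]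
  set ε : ℝ := if 0 < q then (α / q) ^ (1 / α) else 1 with hε
  have hε0 : 0 < ε := by
    rw [hε]; split_ifs with h
    · exact Real.rpow_pos_of_pos (by positivity) _
    · exact one_pos
  have hsub : Metric.ball (0 : EuclideanSpace ℝ (Fin n)) ε ⊆
      Function.support fun x => gProfile n α q ‖x‖ := by
    intro x hx
    rw [Metric.mem_ball, dist_zero_right] at hx
    apply ne_of_gt
    apply gProfile_pos hα (norm_nonneg x)
    intro hq0
    rw [hε, if_pos hq0] at hx
    have := Real.rpow_lt_rpow (norm_nonneg x) hx hα
    rwa [one_div, Real.rpow_inv_rpow (by positivity) hα.ne'] at this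
  exact lt_of_lt_of_le (Metric.measure_ball_pos volume 0 hε0) (measure_mono hsub)

end IsoAux

set_option maxHeartbeats 1000000 in
/-- Counting of constant solutions of the isotropic equation. For
`1 ≤ p < n`, `α > 0`, `q < α/(n+α)`, set `F(r) = r^{n−p} g_{α,q}(r e)` (`e` a unit vector)
and `R = (α/q)^{1/α}` if `q > 0`, `R = ∞` if `q ≤ 0`. Then `F → 0` at `0⁺` and at `R`,
`F` vanishes on `[R,∞)` when `q > 0`, there is a unique `r* ∈ (0,R)` with `F` strictly
increasing on `(0,r*]` and strictly decreasing on `[r*,R)`, and, with `c* = F(r*) > 0`,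
the equation `F(r) = c`, `r > 0`, has precisely two solutions if `0 < c < c*`, exactly one
if `c = c*`, and none if `c > c*`. -/
theorem isotropic_constant_solution_count
    (n : ℕ) (hn : 2 ≤ n) (p α q : ℝ) (hp1 : 1 ≤ p) (hpn : p < (n : ℝ))
    (hα : 0 < α) (hq : q < α / ((n : ℝ) + α))
    (e : EuclideanSpace ℝ (Fin n)) (he : ‖e‖ = 1)
    (F : ℝ → ℝ) (hF : F = fun r => r ^ ((n : ℝ) - p) * gGauss n α q (r • e))
    (S : Set ℝ)
    (hS : S = if 0 < q then Set.Ioo (0 : ℝ) ((α / q) ^ (1 / α)) else Set.Ioi (0 : ℝ)) :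
    Filter.Tendsto F (nhdsWithin 0 (Set.Ioi 0)) (nhds 0) ∧
    (0 < q → Filter.Tendsto F
      (nhdsWithin ((α / q) ^ (1 / α)) (Set.Iio ((α / q) ^ (1 / α)))) (nhds 0)) ∧
    (q ≤ 0 → Filter.Tendsto F Filter.atTop (nhds 0)) ∧
    (0 < q → ∀ r : ℝ, (α / q) ^ (1 / α) ≤ r → F r = 0) ∧
    ∃ rstar ∈ S,
      (StrictMonoOn F (Set.Ioc 0 rstar) ∧ StrictAntiOn F (S ∩ Set.Ici rstar)) ∧
      (∀ r' ∈ S,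
        (StrictMonoOn F (Set.Ioc 0 r') ∧ StrictAntiOn F (S ∩ Set.Ici r')) → r' = rstar) ∧
      0 < F rstar ∧
      ∀ c : ℝ,
        (0 < c → c < F rstar →
          ∃ r₁ r₂ : ℝ, 0 < r₁ ∧ 0 < r₂ ∧ r₁ ≠ r₂ ∧ F r₁ = c ∧ F r₂ = c ∧
            ∀ r : ℝ, 0 < r → F r = c → r = r₁ ∨ r = r₂) ∧
        (c = F rstar → ∃! r : ℝ, 0 < r ∧ F r = c) ∧
        (F rstar < c → ∀ r : ℝ, 0 < r → F r ≠ c) := by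
  have hm : 0 < (n : ℝ) - p := by linarith
  have hnα : (0 : ℝ) < (n : ℝ) + α := by positivity
  have hqα : q * ((n : ℝ) + α) < α := (lt_div_iff₀ hnα).mp hq
  have hK : 0 < 1 - q * (p + α) / α := by
    rw [sub_pos, div_lt_one hα]
    rcases le_or_gt q 0 with h | h
    · nlinarith
    · nlinarith
  have hZ : 0 < Zconst n α q := IsoAux.Zpos hα hq
  set Zi := (Zconst n α q)⁻¹ with hZi
  have hZi0 : 0 < Zi := inv_pos.mpr hZ
  set φ : ℝ → ℝ := fun r => r ^ ((n : ℝ) - p) * gProfile n α q r with hφdef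
  have hFr : ∀ r : ℝ, 0 < r → F r = Zi * φ r := by
    intro r hr
    simp only [hF, gGauss, hφdef, norm_smul, he, mul_one, Real.norm_eq_abs,
      abs_of_pos hr, hZi]
    ring
  set rstar : ℝ := (((n : ℝ) - p) / (1 - q * (p + α) / α)) ^ (1 / α) with hrsdef
  set R : ℝ := (α / q) ^ (1 / α) with hRdef
  have hrs0 : 0 < rstar := Real.rpow_pos_of_pos (div_pos hm hK) _
  have hrsα : rstar ^ α = ((n : ℝ) - p) / (1 - q * (p + α) / α) := by
    rw [hrsdef, one_div, Real.rpow_inv_rpow (div_pos hm hK).le hα.ne']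
  have hRα : 0 < q → R ^ α = α / q := fun h => by
    rw [hRdef, one_div, Real.rpow_inv_rpow (div_pos hα h).le hα.ne']
  have hR0 : 0 < q → 0 < R := fun h => Real.rpow_pos_of_pos (div_pos hα h) _
  have hKα : α * (1 - q * (p + α) / α) = α - q * (p + α) := by field_simp
  have hrsR : 0 < q → rstar < R := by
    intro h
    rw [hrsdef, hRdef]
    apply Real.rpow_lt_rpow (div_pos hm hK).le ?_ (by positivity)
    rw [div_lt_div_iff₀ hK h, hKα]
    nlinarith
  have hrsαR : 0 < q → rstar ^ α < α / q := by
    intro h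
    rw [← hRα h]
    exact Real.rpow_lt_rpow hrs0.le (hrsR h) hα
  have hin : ∀ r : ℝ, r ∈ S ↔ (0 < r ∧ (0 < q → r ^ α < α / q)) := by
    intro r
    rw [hS]
    split_ifs with hq0
    · constructor
      · rintro ⟨h1, h2⟩
        refine ⟨h1, fun _ => ?_⟩
        rw [← hRα hq0]
        exact Real.rpow_lt_rpow h1.le h2 hα
      · rintro ⟨h1, h2⟩
        refine ⟨h1, ?_⟩
        have h3 := h2 hq0
        rw [← hRα hq0] at h3
        exact (Real.rpow_lt_rpow_iff h1.le (hR0 hq0).le hα).mp h3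
    · exact ⟨fun h => ⟨h, fun h' => absurd h' hq0⟩, fun h => h.1⟩
  have hrsS : rstar ∈ S := (hin rstar).mpr ⟨hrs0, hrsαR⟩
  have hconvS : ∀ a ∈ S, ∀ b ∈ S, ∀ x : ℝ, a ≤ x → x ≤ b → x ∈ S := by
    rw [hS]
    split_ifs with hq0
    · rintro a ⟨ha1, ha2⟩ b ⟨hb1, hb2⟩ x hax hxb
      exact ⟨lt_of_lt_of_le ha1 hax, lt_of_le_of_lt hxb hb2⟩
    · rintro a ha b hb x hax hxb
      exact lt_of_lt_of_le ha hax
  have hDF : ∀ r ∈ S, ∃ d : ℝ, HasDerivAt F d r ∧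
      (r < rstar → 0 < d) ∧ (rstar < r → d < 0) := by
    intro r hr
    obtain ⟨h1, h2⟩ := (hin r).mp hr
    obtain ⟨w, hw, hd⟩ := IsoAux.phi_deriv (p := p) hα h1 h2
    refine ⟨Zi * (r ^ ((n : ℝ) - p - 1) * w *
      (((n : ℝ) - p) - (1 - q * (p + α) / α) * r ^ α)), ?_, ?_, ?_⟩
    · have hder : HasDerivAt (fun x => Zi * φ x) (Zi * (r ^ ((n : ℝ) - p - 1) * w *
        (((n : ℝ) - p) - (1 - q * (p + α) / α) * r ^ α))) r := hd.const_mul Zi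
      apply hder.congr_of_eventuallyEq
      filter_upwards [Ioi_mem_nhds h1] with x hx
      exact hFr x hx
    · intro hlt
      have hsign : 0 < ((n : ℝ) - p) - (1 - q * (p + α) / α) * r ^ α := by
        have h3 : r ^ α < rstar ^ α := Real.rpow_lt_rpow h1.le hlt hα
        rw [hrsα] at h3
        have h4 := (lt_div_iff₀ hK).mp h3
        linarith
      exact mul_pos hZi0 (mul_pos (mul_pos (Real.rpow_pos_of_pos h1 _) hw) hsign)
    · intro hlt
      have hsign : ((n : ℝ) - p) - (1 - q * (p + α) / α) * r ^ α < 0 := by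
        have h3 : rstar ^ α < r ^ α := Real.rpow_lt_rpow hrs0.le hlt hα
        rw [hrsα] at h3
        have h4 := (div_lt_iff₀ hK).mp h3
        linarith
      exact mul_neg_of_pos_of_neg hZi0
        (mul_neg_of_pos_of_neg (mul_pos (Real.rpow_pos_of_pos h1 _) hw) hsign)
  have hcontS : ContinuousOn F S := by
    intro r hr
    obtain ⟨d, hd, -, -⟩ := hDF r hr
    exact hd.continuousAt.continuousWithinAt
  have hsub1 : Set.Ioc 0 rstar ⊆ S := by
    intro x hx
    refine (hin x).mpr ⟨hx.1, fun h => ?_⟩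
    exact lt_of_le_of_lt (Real.rpow_le_rpow hx.1.le hx.2 hα.le) (hrsαR h)
  have hA1 : StrictMonoOn F (Set.Ioc 0 rstar) := by
    apply strictMonoOn_of_deriv_pos (convex_Ioc 0 rstar) (hcontS.mono hsub1)
    intro x hx
    rw [interior_Ioc] at hx
    obtain ⟨d, hd, hp', -⟩ := hDF x (hsub1 (Set.Ioo_subset_Ioc_self hx))
    rw [hd.deriv]
    exact hp' hx.2
  have hA2 : StrictAntiOn F (S ∩ Set.Ici rstar) := by
    by_cases hq0 : 0 < q
    · have hSint : S ∩ Set.Ici rstar = Set.Ico rstar R := by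
        rw [hS, if_pos hq0]
        ext x
        simp only [Set.mem_inter_iff, Set.mem_Ioo, Set.mem_Ici, Set.mem_Ico]
        exact ⟨fun ⟨⟨_, h2⟩, h3⟩ => ⟨h3, h2⟩,
          fun ⟨h3, h2⟩ => ⟨⟨lt_of_lt_of_le hrs0 h3, h2⟩, h3⟩⟩
      rw [hSint]
      apply strictAntiOn_of_deriv_neg (convex_Ico _ _)
        (by rw [← hSint] at *; exact hcontS.mono Set.inter_subset_left)
      intro x hx
      rw [interior_Ico] at hx
      have hxS : x ∈ S := by
        rw [hS, if_pos hq0]; exact ⟨lt_trans hrs0 hx.1, hx.2⟩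
      obtain ⟨d, hd, -, hneg⟩ := hDF x hxS
      rw [hd.deriv]
      exact hneg hx.1
    · have hSint : S ∩ Set.Ici rstar = Set.Ici rstar := by
        rw [hS, if_neg hq0]
        ext x
        simp only [Set.mem_inter_iff, Set.mem_Ioi, Set.mem_Ici]
        exact ⟨fun h => h.2, fun h => ⟨lt_of_lt_of_le hrs0 h, h⟩⟩
      rw [hSint]
      apply strictAntiOn_of_deriv_neg (convex_Ici _)
        (by rw [← hSint] at *; exact hcontS.mono Set.inter_subset_left)
      intro x hx
      rw [interior_Ici] at hx
      have hxS : x ∈ S := (hin x).mpr ⟨lt_trans hrs0 hx, fun h => absurd h hq0⟩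
      obtain ⟨d, hd, -, hneg⟩ := hDF x hxS
      rw [hd.deriv]
      exact hneg hx
  have hFpos : 0 < F rstar := by
    rw [hFr rstar hrs0]
    exact mul_pos hZi0 (mul_pos (Real.rpow_pos_of_pos hrs0 _)
      (IsoAux.gProfile_pos hα hrs0.le hrsαR))
  have hzero : ∀ r : ℝ, 0 < r → r ∉ S → F r = 0 := by
    intro r hr hrS
    rw [hin] at hrS
    push_neg at hrS
    obtain ⟨hq0, hle⟩ := hrS hr
    have hg0 := IsoAux.gProfile_eq_zero (n := n) hα hq0 hq hle
    rw [hFr r hr, hφdef]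
    simp [hg0]
  have htm : Tendsto (fun r : ℝ => r ^ ((n : ℝ) - p)) (nhdsWithin 0 (Set.Ioi 0)) (nhds 0) := by
    have hc := (Real.continuousAt_rpow_const 0 ((n : ℝ) - p) (Or.inr hm.le)).continuousWithinAt
      (s := Set.Ioi 0)
    simpa [ContinuousWithinAt, Real.zero_rpow hm.ne'] using hc
  have hta : Tendsto (fun r : ℝ => r ^ α) (nhdsWithin 0 (Set.Ioi 0)) (nhds 0) := by
    have hc := (Real.continuousAt_rpow_const 0 α (Or.inr hα.le)).continuousWithinAt
      (s := Set.Ioi 0)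
    simpa [ContinuousWithinAt, Real.zero_rpow hα.ne'] using hc
  have hg1 : Tendsto (fun r : ℝ => gProfile n α q r) (nhdsWithin 0 (Set.Ioi 0)) (nhds 1) := by
    rcases eq_or_ne q 0 with hq0 | hq0
    · have h1 : Tendsto (fun r : ℝ => -(r ^ α) / α) (nhdsWithin 0 (Set.Ioi 0)) (nhds 0) := by
        have := (hta.neg).div_const α
        simpa using this
      have h2 := (Real.continuous_exp.tendsto 0).comp h1
      simp only [Real.exp_zero] at h2
      refine h2.congr fun r => ?_
      simp [gProfile, hq0, Function.comp]
    · have h2 : Tendsto (fun r : ℝ => 1 - q / α * r ^ α) (nhdsWithin 0 (Set.Ioi 0)) (nhds 1) := by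
        have := (hta.const_mul (q / α)).const_sub 1
        simpa using this
      have h1 : Tendsto (fun r : ℝ => max (1 - q / α * r ^ α) 0) (nhdsWithin 0 (Set.Ioi 0))
          (nhds 1) := by
        have h3 := h2.max (tendsto_const_nhds (x := (0:ℝ)))
        simpa using h3
      have h4 := ((Real.continuousAt_rpow_const 1 (1 / q - (n : ℝ) / α - 1)
        (Or.inl one_ne_zero)).tendsto).comp h1
      simp only [Real.one_rpow] at h4
      refine h4.congr fun r => ?_
      simp [gProfile, hq0, Function.comp]
  have hB1 : Tendsto F (nhdsWithin 0 (Set.Ioi 0)) (nhds 0) := by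
    have h1 : Tendsto φ (nhdsWithin 0 (Set.Ioi 0)) (nhds 0) := by
      have := htm.mul hg1
      simpa [hφdef] using this
    have h2 : Tendsto (fun r => Zi * φ r) (nhdsWithin 0 (Set.Ioi 0)) (nhds 0) := by
      simpa using h1.const_mul Zi
    apply h2.congr'
    filter_upwards [self_mem_nhdsWithin] with x hx
    exact (hFr x hx).symm
  have hvanish : 0 < q → ∀ r : ℝ, R ≤ r → F r = 0 := by
    intro hq0 r hr
    have hr0 : 0 < r := lt_of_lt_of_le (hR0 hq0) hr
    apply hzero r hr0
    rw [hin]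
    push_neg
    intro _
    refine ⟨hq0, ?_⟩
    rw [← hRα hq0]
    exact Real.rpow_le_rpow (hR0 hq0).le hr hα.le
  have hBR : 0 < q → Tendsto F (nhdsWithin R (Set.Iio R)) (nhds 0) := by
    intro hq0
    set ex := 1 / q - (n : ℝ) / α - 1 with hex
    have hexpos : 0 < ex := IsoAux.ex_pos hα hq0 hq
    have hc1 : ContinuousAt (fun r : ℝ => r ^ ((n : ℝ) - p)) R :=
      Real.continuousAt_rpow_const _ _ (Or.inl (hR0 hq0).ne')
    have hcα : ContinuousAt (fun r : ℝ => r ^ α) R :=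
      Real.continuousAt_rpow_const _ _ (Or.inl (hR0 hq0).ne')
    have hc2 : ContinuousAt (fun r : ℝ => max (1 - q / α * r ^ α) 0) R :=
      ((continuousAt_const.sub (continuousAt_const.mul hcα))).max continuousAt_const
    have hX : 1 - q / α * (α / q) = 0 := by field_simp; ring
    have hval : max (1 - q / α * R ^ α) 0 = 0 := by
      rw [hRα hq0, hX, max_self]
    have hc3 : ContinuousAt (fun y : ℝ => y ^ ex) (max (1 - q / α * R ^ α) 0) := by
      rw [hval]
      exact Real.continuousAt_rpow_const 0 ex (Or.inr hexpos.le)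
    have hc5 : ContinuousAt (fun r : ℝ => (max (1 - q / α * r ^ α) 0) ^ ex) R :=
      hc3.tendsto.comp hc2
    have hc4 : ContinuousAt (fun r : ℝ =>
        Zi * (r ^ ((n : ℝ) - p) * (max (1 - q / α * r ^ α) 0) ^ ex)) R :=
      continuousAt_const.mul (hc1.mul hc5)
    have hlim : Tendsto (fun r : ℝ =>
        Zi * (r ^ ((n : ℝ) - p) * (max (1 - q / α * r ^ α) 0) ^ ex))
        (nhdsWithin R (Set.Iio R)) (nhds 0) := by
      have h5 := hc4.continuousWithinAt (s := Set.Iio R)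
      simpa [ContinuousWithinAt, hval, Real.zero_rpow hexpos.ne'] using h5
    apply hlim.congr'
    filter_upwards [mem_nhdsWithin_of_mem_nhds (Ioi_mem_nhds (hR0 hq0))] with x hx
    rw [hFr x hx, hφdef]
    simp [gProfile, hq0.ne', hex]
  have hBtop : q ≤ 0 → Tendsto F atTop (nhds 0) := by
    intro hqle
    rcases eq_or_lt_of_le hqle with hq0 | hq0
    · have h1 := tendsto_rpow_mul_exp_neg_mul_atTop_nhds_zero (((n : ℝ) - p) / α) (1 / α)
        (by positivity)
      have h2 : Tendsto (fun r : ℝ => r ^ α) atTop atTop := tendsto_rpow_atTop hα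
      have h3 := h1.comp h2
      have h4 : Tendsto (fun x : ℝ =>
          Zi * ((x ^ α) ^ (((n : ℝ) - p) / α) * Real.exp (-(1 / α) * x ^ α))) atTop (nhds 0) := by
        have := h3.const_mul Zi
        simpa [Function.comp] using this
      apply h4.congr'
      filter_upwards [eventually_gt_atTop (0 : ℝ)] with x hx0
      rw [hFr x hx0, hφdef]
      have e1 : (x ^ α) ^ (((n : ℝ) - p) / α) = x ^ ((n : ℝ) - p) := by
        rw [← Real.rpow_mul hx0.le]
        congr 1
        field_simp
      have e2 : Real.exp (-(1 / α) * x ^ α) = gProfile n α q x := by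
        rw [hq0]
        simp only [gProfile, if_pos rfl]
        congr 1
        ring
      rw [e1, e2]
    · set ex := 1 / q - (n : ℝ) / α - 1 with hex
      have hexneg : ex < 0 := by
        have h1 : 1 / q < 0 := div_neg_of_pos_of_neg one_pos hq0
        have h2 : 0 ≤ (n : ℝ) / α := by positivity
        rw [hex]; linarith
      set c := -(q / α) with hc
      have hc0 : 0 < c := by
        have : q / α < 0 := div_neg_of_neg_of_pos hq0 hα
        rw [hc]; linarith
      have hexp_lt : ((n : ℝ) - p) + α * ex < 0 := by
        have e3 : α * ex = α / q - (n : ℝ) - α := by rw [hex]; field_simp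
        have h4 : α / q < 0 := div_neg_of_pos_of_neg hα hq0
        rw [e3] at *
        linarith
      have hupper : ∀ x : ℝ, 0 < x →
          F x ≤ (Zi * c ^ ex) * x ^ (((n : ℝ) - p) + α * ex) := by
        intro x hx0
        have hxα : 0 < x ^ α := Real.rpow_pos_of_pos hx0 α
        have h5 : q / α * x ^ α ≤ 0 :=
          mul_nonpos_iff.mpr (Or.inr ⟨(div_neg_of_neg_of_pos hq0 hα).le, hxα.le⟩)
        have hg : gProfile n α q x = (1 + c * x ^ α) ^ ex := by
          simp only [gProfile, if_neg hq0.ne, ← hex, hc]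
          congr 1
          rw [max_eq_left (by linarith : (0:ℝ) ≤ 1 - q / α * x ^ α)]
          ring
        have hb : (1 + c * x ^ α) ^ ex ≤ (c * x ^ α) ^ ex :=
          Real.rpow_le_rpow_of_nonpos (by positivity) (by linarith) hexneg.le
        have he2 : (c * x ^ α) ^ ex = c ^ ex * x ^ (α * ex) := by
          rw [Real.mul_rpow hc0.le hxα.le, ← Real.rpow_mul hx0.le]
        have he3 : x ^ (((n : ℝ) - p) + α * ex) = x ^ ((n : ℝ) - p) * x ^ (α * ex) :=
          Real.rpow_add hx0 _ _
        rw [hFr x hx0, hφdef]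
        calc Zi * (x ^ ((n : ℝ) - p) * gProfile n α q x)
            ≤ Zi * (x ^ ((n : ℝ) - p) * (c ^ ex * x ^ (α * ex))) := by
              apply mul_le_mul_of_nonneg_left _ hZi0.le
              apply mul_le_mul_of_nonneg_left _ (Real.rpow_nonneg hx0.le _)
              rw [hg, ← he2]
              exact hb
          _ = (Zi * c ^ ex) * x ^ (((n : ℝ) - p) + α * ex) := by rw [he3]; ring
      have hlower : ∀ x : ℝ, 0 < x → 0 ≤ F x := by
        intro x hx0
        rw [hFr x hx0, hφdef]
        have h6 := IsoAux.gProfile_nonneg (n := n) (α := α) (q := q) x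
        have h7 : (0:ℝ) ≤ x ^ ((n : ℝ) - p) := Real.rpow_nonneg hx0.le _
        positivity
      have htail : Tendsto (fun x : ℝ => (Zi * c ^ ex) * x ^ (((n : ℝ) - p) + α * ex))
          atTop (nhds 0) := by
        have h6 : Tendsto (fun x : ℝ => x ^ (((n : ℝ) - p) + α * ex)) atTop (nhds 0) := by
          have h7 := tendsto_rpow_neg_atTop (y := -(((n : ℝ) - p) + α * ex)) (by linarith)
          simpa using h7
        simpa using h6.const_mul (Zi * c ^ ex)
      apply tendsto_of_tendsto_of_tendsto_of_le_of_le' tendsto_const_nhds htail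
      · filter_upwards [eventually_gt_atTop (0 : ℝ)] with x hx using hlower x hx
      · filter_upwards [eventually_gt_atTop (0 : ℝ)] with x hx using hupper x hx
  have hend : ∀ cc : ℝ, 0 < cc → ∃ b ∈ S, rstar < b ∧ F b < cc := by
    intro cc hcc
    by_cases hq0 : 0 < q
    · have h2 : Set.Ioo rstar R ∈ nhdsWithin R (Set.Iio R) :=
        Ioo_mem_nhdsLT_of_mem ⟨hrsR hq0, le_refl R⟩
      have h1 : F ⁻¹' Set.Iio cc ∈ nhdsWithin R (Set.Iio R) := hBR hq0 (Iio_mem_nhds hcc)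
      obtain ⟨b, hb1, hb2⟩ := Filter.nonempty_of_mem (Filter.inter_mem h1 h2)
      refine ⟨b, ?_, hb2.1, hb1⟩
      rw [hS, if_pos hq0]
      exact ⟨lt_trans hrs0 hb2.1, hb2.2⟩
    · have h1 : ∀ᶠ x in atTop, F x < cc ∧ rstar < x := by
        filter_upwards [(hBtop (not_lt.mp hq0)) (Iio_mem_nhds hcc),
          eventually_gt_atTop rstar] with x h5 h6
        exact ⟨h5, h6⟩
      obtain ⟨b, hb1, hb2⟩ := h1.exists
      exact ⟨b, (hin b).mpr ⟨lt_trans hrs0 hb2, fun h => absurd h hq0⟩, hb2, hb1⟩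
  have hmax : ∀ r : ℝ, 0 < r → F r ≤ F rstar := by
    intro r hr
    rcases lt_trichotomy r rstar with h | h | h
    · exact (hA1 ⟨hr, h.le⟩ ⟨hrs0, le_refl _⟩ h).le
    · rw [h]
    · by_cases hrS : r ∈ S
      · exact (hA2 ⟨hrsS, Set.self_mem_Ici⟩ ⟨hrS, h.le⟩ h).le
      · rw [hzero r hr hrS]; exact hFpos.le
  have huniq : ∀ r' ∈ S,
      (StrictMonoOn F (Set.Ioc 0 r') ∧ StrictAntiOn F (S ∩ Set.Ici r')) → r' = rstar := by
    rintro r' hr'S ⟨hmono', hanti'⟩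
    have hr'0 : 0 < r' := ((hin r').mp hr'S).1
    rcases lt_trichotomy r' rstar with h | h | h
    · exfalso
      set s := (r' + rstar) / 2 with hs'
      have hs1 : r' < s := by rw [hs']; linarith
      have hs2 : s < rstar := by rw [hs']; linarith
      have hsS : s ∈ S := hconvS r' hr'S rstar hrsS s hs1.le hs2.le
      have hlt1 : F r' < F s := hA1 ⟨hr'0, h.le⟩ ⟨lt_trans hr'0 hs1, hs2.le⟩ hs1
      have hlt2 : F s < F r' := hanti' ⟨hr'S, Set.self_mem_Ici⟩ ⟨hsS, hs1.le⟩ hs1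
      linarith
    · exact h
    · exfalso
      set s := (rstar + r') / 2 with hs'
      have hs1 : rstar < s := by rw [hs']; linarith
      have hs2 : s < r' := by rw [hs']; linarith
      have hsS : s ∈ S := hconvS rstar hrsS r' hr'S s hs1.le hs2.le
      have hlt1 : F rstar < F s := hmono' ⟨hrs0, h.le⟩ ⟨lt_trans hrs0 hs1, hs2.le⟩ hs1
      have hlt2 : F s < F rstar := hA2 ⟨hrsS, Set.self_mem_Ici⟩ ⟨hsS, hs1.le⟩ hs1
      linarith
  refine ⟨hB1, hBR, hBtop, hvanish, rstar, hrsS, ⟨hA1, hA2⟩, huniq, hFpos, ?_⟩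
  intro c
  refine ⟨?_, ?_, ?_⟩
  · intro hc hcc
    have h1 : F ⁻¹' Set.Iio c ∈ nhdsWithin 0 (Set.Ioi 0) := hB1 (Iio_mem_nhds hc)
    have h2 : Set.Ioo 0 rstar ∈ nhdsWithin 0 (Set.Ioi 0) :=
      Ioo_mem_nhdsGT_of_mem ⟨le_refl 0, hrs0⟩
    obtain ⟨a, ha1, ha2⟩ := Filter.nonempty_of_mem (Filter.inter_mem h1 h2)
    have haF : F a < c := ha1
    have hIcc1 : Set.Icc a rstar ⊆ Set.Ioc 0 rstar := fun x hx =>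
      ⟨lt_of_lt_of_le ha2.1 hx.1, hx.2⟩
    obtain ⟨r₁, hr₁mem, hr₁⟩ := intermediate_value_Icc ha2.2.le
      (hcontS.mono (hIcc1.trans hsub1)) ⟨haF.le, hcc.le⟩
    obtain ⟨b, hbS, hrb, hFb⟩ := hend c hc
    have hIcc2 : Set.Icc rstar b ⊆ S ∩ Set.Ici rstar := fun x hx =>
      ⟨hconvS rstar hrsS b hbS x hx.1 hx.2, hx.1⟩
    obtain ⟨r₂, hr₂mem, hr₂⟩ := intermediate_value_Icc' hrb.le
      (hcontS.mono (fun x hx => (hIcc2 hx).1)) ⟨hFb.le, hcc.le⟩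
    have hr₁0 : 0 < r₁ := lt_of_lt_of_le ha2.1 hr₁mem.1
    have hr₁lt : r₁ < rstar := lt_of_le_of_ne hr₁mem.2
      (fun hh => by rw [hh] at hr₁; exact absurd hr₁ (ne_of_gt hcc))
    have hr₂gt : rstar < r₂ := lt_of_le_of_ne hr₂mem.1
      (fun hh => by rw [← hh] at hr₂; exact absurd hr₂ (ne_of_gt hcc))
    have hr₂0 : 0 < r₂ := lt_trans hrs0 hr₂gt
    have hr₂S : r₂ ∈ S := (hIcc2 hr₂mem).1
    refine ⟨r₁, r₂, hr₁0, hr₂0, ne_of_lt (lt_trans hr₁lt hr₂gt), hr₁, hr₂, ?_⟩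
    intro r hr hFr'
    rcases le_or_gt r rstar with h | h
    · left
      have hrlt : r ≤ rstar := h
      exact hA1.injOn ⟨hr, h⟩ ⟨hr₁0, hr₁mem.2⟩ (hFr'.trans hr₁.symm)
    · by_cases hrS : r ∈ S
      · right
        exact hA2.injOn ⟨hrS, h.le⟩ ⟨hr₂S, hr₂mem.1⟩ (hFr'.trans hr₂.symm)
      · exfalso
        rw [hzero r hr hrS] at hFr'
        exact absurd hFr'.symm (ne_of_gt hc)
  · intro hceq
    refine ⟨rstar, ⟨hrs0, hceq.symm⟩, ?_⟩
    rintro r ⟨hr, hFr'⟩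
    rcases lt_trichotomy r rstar with h | h | h
    · exfalso
      have h8 := hA1 ⟨hr, h.le⟩ ⟨hrs0, le_refl _⟩ h
      rw [hFr', ← hceq] at h8
      exact lt_irrefl c h8
    · exact h
    · exfalso
      by_cases hrS : r ∈ S
      · have h8 := hA2 ⟨hrsS, Set.self_mem_Ici⟩ ⟨hrS, h.le⟩ h
        rw [hFr', ← hceq] at h8
        exact lt_irrefl c h8
      · rw [hzero r hr hrS] at hFr'
        rw [← hFr'] at hceq
        linarith
  · intro hcgt r hr hFr'
    have h8 := hmax r hr
    rw [hFr'] at h8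
    linarith
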